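/- Fix α ∈ (0, 1] and set c_α = cos(απ/2), s_α = sin(απ/2). Define for x > 0: ω_α(x) = −2s_α x^α/(1 + 2c_α x^α + x^{2α}), u_{α,x}(x) = 2(1 + c_α x^α)/(1 + 2c_α x^α + x^{2α}), and the weight φ_α(x) = (1/(2s_α))·(1 + 2c_α x^α + x^{2α})²/x^{1+3α}. Then for all x > 0: (1/(2φ_α(x)))·(d/dx)((x/α)·φ_α(x)) + (−1 + u_{α,x}(x)) = −1/2. -/

import Mathlib

open Real

noncomputable def ωα (α x : ℝ) : ℝ :=
  -2 * Real.sin (α * π / 2) * x ^ α / (1 + 2 * Real.cos (α * π / 2) * x ^ α + x ^ (2 * α))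

noncomputable def uαx (α x : ℝ) : ℝ :=
  2 * (1 + Real.cos (α * π / 2) * x ^ α) / (1 + 2 * Real.cos (α * π / 2) * x ^ α + x ^ (2 * α))

noncomputable def φα (α x : ℝ) : ℝ :=
  (1 / (2 * Real.sin (α * π / 2))) *
    (1 + 2 * Real.cos (α * π / 2) * x ^ α + x ^ (2 * α)) ^ 2 / x ^ (1 + 3 * α)

theorem damping_L2_alpha (α : ℝ) (hα : α ∈ Set.Ioc (0:ℝ) 1) (x : ℝ) (hx : 0 < x) :
    (1 / (2 * φα α x)) * deriv (fun y => (y / α) * φα α y) x + (-1 + uαx α x) = -(1/2) := by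
  obtain ⟨hα0, hα1⟩ := hα
  have hπ := Real.pi_pos
  set c := Real.cos (α * π / 2) with hc
  set s := Real.sin (α * π / 2) with hs
  have hs0 : 0 < s := Real.sin_pos_of_pos_of_lt_pi (by positivity) (by nlinarith)
  have hx0 : x ≠ 0 := hx.ne'
  have ht : (0:ℝ) < x ^ α := Real.rpow_pos_of_pos hx α
  set t := x ^ α with htdef
  have hcs : c ^ 2 + s ^ 2 = 1 := by rw [hc, hs]; exact Real.cos_sq_add_sin_sq _
  have hD : (0:ℝ) < 1 + 2 * c * t + t ^ 2 := by nlinarith [sq_nonneg (t + c)]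
  have h2a : x ^ (2 * α) = t ^ 2 := by
    rw [htdef, ← Real.rpow_natCast (x ^ α) 2, ← Real.rpow_mul hx.le]
    norm_num [mul_comm]
  have ham1 : x ^ (α - 1) = t / x := by rw [Real.rpow_sub hx, Real.rpow_one]
  have h2am1 : x ^ (2 * α - 1) = t ^ 2 / x := by rw [Real.rpow_sub hx, h2a, Real.rpow_one]
  have h3a : x ^ (3 * α) = t ^ 3 := by
    rw [htdef, ← Real.rpow_natCast (x ^ α) 3, ← Real.rpow_mul hx.le]
    norm_num [mul_comm]
  have h13a : x ^ (1 + 3 * α) = x * t ^ 3 := by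
    rw [Real.rpow_add hx, Real.rpow_one, h3a]
  have hDα : HasDerivAt (fun y : ℝ => y ^ α) (α * x ^ (α - 1)) x :=
    Real.hasDerivAt_rpow_const (Or.inl hx0)
  have hD2α : HasDerivAt (fun y : ℝ => y ^ (2 * α)) ((2 * α) * x ^ (2 * α - 1)) x :=
    Real.hasDerivAt_rpow_const (Or.inl hx0)
  have hDen : HasDerivAt (fun y : ℝ => y ^ (1 + 3 * α)) ((1 + 3 * α) * x ^ (3 * α)) x := by
    have h := Real.hasDerivAt_rpow_const (p := 1 + 3 * α) (Or.inl hx0)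
    rw [show (1 + 3 * α - 1 : ℝ) = 3 * α from by ring] at h
    exact h
  have hN : HasDerivAt (fun y : ℝ => 1 + 2 * c * y ^ α + y ^ (2 * α))
      (2 * c * (α * x ^ (α - 1)) + (2 * α) * x ^ (2 * α - 1)) x :=
    ((hDα.const_mul (2 * c)).const_add 1).add hD2α
  have hN2 := hN.pow 2
  have hnum := hN2.const_mul (1 / (2 * s))
  have hden_ne : x ^ (1 + 3 * α) ≠ 0 := by rw [h13a]; positivity
  have hφ : HasDerivAt (fun y : ℝ => φα α y)
      (((1 / (2 * s)) * ((2:ℕ) * (1 + 2 * c * x ^ α + x ^ (2 * α)) ^ (2 - 1) *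
          (2 * c * (α * x ^ (α - 1)) + (2 * α) * x ^ (2 * α - 1))) * x ^ (1 + 3 * α)
        - (1 / (2 * s)) * (1 + 2 * c * x ^ α + x ^ (2 * α)) ^ 2 *
          ((1 + 3 * α) * x ^ (3 * α))) / (x ^ (1 + 3 * α)) ^ 2) x := by
    have h := hnum.div hDen hden_ne
    rw [show ∀ f g : ℝ → ℝ, f / g = fun y => f y / g y from fun _ _ => rfl] at h
    simpa [φα, ← hc, ← hs, mul_comm, mul_assoc, mul_left_comm] using h
  have hid : HasDerivAt (fun y : ℝ => y / α) (1 / α) x := by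
    simpa using (hasDerivAt_id x).div_const α
  have hf := hid.mul hφ
  rw [show (fun y => y / α * φα α y) = (fun y => y / α) * (fun y => φα α y) from rfl, hf.deriv]
  simp only [φα, uαx, ← hc, ← hs, ← htdef, h2a, ham1, h2am1, h3a, h13a]
  have htne : t ≠ 0 := ht.ne'
  have hαne : α ≠ 0 := hα0.ne'
  have hDne : (1 + 2 * c * t + t ^ 2) ≠ 0 := hD.ne'
  field_simp
  ring
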